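/- arXiv:2502.05464 — 3 statements merged into one kernel-verified Lean document; each statement's English description precedes it below -/
import Mathlib

section
/- Let ω > 0, Π = 2π/ω, a ≠ 0, H* ∈ ℝ, y* ∈ ℝ, D ≥ 0 and χ ∈ ℝ. Define S_D(t) = a·sin(ω(t+D)), N(t) = (16/a²)·(sin²(ωt) - 1/2), and y_c(t, χ) = y* + (H*/2)·(S_D(t - D) + χ)². Then (1/Π)·∫₀^Π N(s)·y_c(s, χ) ds = H*. -/
open Real

lemma sin_int1 : ∫ u in (0:ℝ)..(2*π), Real.sin u = 0 := by
  simp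

lemma sin_int2 : ∫ u in (0:ℝ)..(2*π), Real.sin u ^ 2 = π := by
  rw [integral_sin_sq]
  simp [Real.sin_two_pi, Real.cos_two_pi]

lemma sin_int3 : ∫ u in (0:ℝ)..(2*π), Real.sin u ^ 3 = 0 := by
  have := integral_sin_pow 1 (a := 0) (b := 2*π)
  simpa [Real.sin_two_pi, Real.cos_two_pi] using this

lemma sin_int4 : ∫ u in (0:ℝ)..(2*π), Real.sin u ^ 4 = 3*π/4 := by
  have := integral_sin_pow 2 (a := 0) (b := 2*π)
  rw [sin_int2] at this
  norm_num [Real.sin_two_pi, Real.cos_two_pi] at this ⊢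
  linarith

lemma combo (c0 c1 c2 c3 c4 : ℝ) :
    ∫ u in (0:ℝ)..(2*π), (c0 + c1 * Real.sin u + c2 * Real.sin u ^ 2
      + c3 * Real.sin u ^ 3 + c4 * Real.sin u ^ 4)
    = c0 * (2*π) + c2 * π + c4 * (3*π/4) := by
  have I : ∀ (f g : ℝ → ℝ), Continuous f → Continuous g →
      IntervalIntegrable (fun u => f u + g u) MeasureTheory.volume 0 (2*π) :=
    fun f g hf hg => (hf.add hg).intervalIntegrable _ _
  rw [intervalIntegral.integral_add, intervalIntegral.integral_add,
    intervalIntegral.integral_add, intervalIntegral.integral_add,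
    intervalIntegral.integral_const_mul, intervalIntegral.integral_const_mul,
    intervalIntegral.integral_const_mul, intervalIntegral.integral_const_mul,
    sin_int1, sin_int2, sin_int3, sin_int4]
  · simp; ring
  all_goals apply Continuous.intervalIntegrable; fun_prop

theorem stmt_7 (ω a Hstar ystar D χ : ℝ) (hω : 0 < ω) (ha : a ≠ 0) (hD : 0 ≤ D)
    (SD N : ℝ → ℝ) (yc : ℝ → ℝ → ℝ)
    (hS : ∀ t, SD t = a * Real.sin (ω * (t + D)))
    (hN : ∀ t, N t = (16 / a ^ 2) * (Real.sin (ω * t) ^ 2 - 1 / 2))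
    (hy : ∀ t c, yc t c = ystar + Hstar / 2 * (SD (t - D) + c) ^ 2) :
    (1 / (2 * Real.pi / ω)) * ∫ s in (0 : ℝ)..(2 * Real.pi / ω), N s * yc s χ
      = Hstar := by
  set c0 : ℝ := (16/a^2) * (-(ystar + Hstar*χ^2/2)/2) with hc0
  set c1 : ℝ := (16/a^2) * (-(Hstar*a*χ)/2) with hc1
  set c2 : ℝ := (16/a^2) * ((ystar + Hstar*χ^2/2) - (Hstar*a^2/2)/2) with hc2
  set c3 : ℝ := (16/a^2) * (Hstar*a*χ) with hc3
  set c4 : ℝ := (16/a^2) * (Hstar*a^2/2) with hc4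
  have key : (∫ s in (0:ℝ)..(2*π/ω), N s * yc s χ)
      = ∫ s in (0:ℝ)..(2*π/ω), (fun u => c0 + c1 * Real.sin u + c2 * Real.sin u ^ 2
        + c3 * Real.sin u ^ 3 + c4 * Real.sin u ^ 4) (ω * s) := by
    apply intervalIntegral.integral_congr
    intro s _
    simp only [hN, hy, hS, sub_add_cancel, hc0, hc1, hc2, hc3, hc4]
    field_simp
    ring
  rw [key, intervalIntegral.integral_comp_mul_left (fun u => c0 + c1 * Real.sin u + c2 * Real.sin u ^ 2 + c3 * Real.sin u ^ 3 + c4 * Real.sin u ^ 4) hω.ne']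
  have h2 : ω * (2*π/ω) = 2*π := by field_simp
  rw [h2, mul_zero, combo]
  have hπ := Real.pi_pos
  rw [hc0, hc2, hc4]
  field_simp [hc0, hc2, hc4, hω.ne', ha]
  have h1 : ω * ω⁻¹ = 1 := mul_inv_cancel₀ hω.ne'
  have h3 : a ^ 2 * a⁻¹ ^ 2 = 1 := by rw [← mul_pow, mul_inv_cancel₀ ha, one_pow]
  linear_combination (π * Hstar * 2 * a ^ 2 * a⁻¹ ^ 2) * h1 + (π * Hstar * 2) * h3
end

section
/- Let T > 0, δ ∈ (-1, 1], t̄_n = 2Tn - δT, and let K_T be as in the unit-mass property with ∫_{t̄_n+T}^{t̄_{n+1}} K_T = 1 and 0 ≤ K_T(t) ≤ 2/T. Suppose x is continuous and solves ẋ(t) = -K_T(t)·x(t-T) + v(t) on [t̄_n, t̄_{n+1}] with v continuous. Then for all t ∈ [t̄_n + T, t̄_{n+1}], x(t) = x(t̄_n)·(1 - ∫_{t̄_n+T}^t K_T(τ)dτ) + ∫_{t̄_n}^t v(τ)dτ - ∫_{t̄_n+T}^t K_T(τ)·(∫_{t̄_n}^{τ-T} v(s)ds)dτ, and in particular |x(t̄_{n+1})|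 ≤ 3T·sup_{t̄_n ≤ τ ≤ t̄_{n+1}} |v(τ)|. -/
open Real Set

set_option maxHeartbeats 1000000 in
theorem stmt_11 (T δ : ℝ) (hT : 0 < T) (hδ : δ ∈ Set.Ioc (-1 : ℝ) 1) (n : ℕ)
    (K x v : ℝ → ℝ)
    (hK : ∀ t, K t = (2 / T) * max 0
      (-(Real.sin ((Real.pi / T) * (t + δ * T)))
        * |Real.sin ((Real.pi / T) * (t + δ * T))|))
    (hx : Continuous x) (hv : Continuous v)
    (hode : ∀ t ∈ Icc (2 * T * n - δ * T) (2 * T * (n + 1) - δ * T),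
      HasDerivAt x (-(K t) * x (t - T) + v t) t) :
    (∀ t ∈ Icc ((2 * T * n - δ * T) + T) (2 * T * (n + 1) - δ * T),
      x t = x (2 * T * n - δ * T) * (1 - ∫ τ in ((2 * T * n - δ * T) + T)..t, K τ)
        + (∫ τ in (2 * T * n - δ * T)..t, v τ)
        - ∫ τ in ((2 * T * n - δ * T) + T)..t,
            K τ * ∫ s in (2 * T * n - δ * T)..(τ - T), v s) ∧
    |x (2 * T * (n + 1) - δ * T)|
      ≤ 3 * T * sSup ((fun τ => |v τ|) ''
          Icc (2 * T * n - δ * T) (2 * T * (n + 1) - δ * T)) := by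
  obtain ⟨hδ1, hδ2⟩ := hδ
  have hπT : 0 < Real.pi / T := div_pos Real.pi_pos hT
  have hTne : T ≠ 0 := ne_of_gt hT
  set a : ℝ := 2 * T * (n : ℝ) - δ * T with ha
  have hb : 2 * T * ((n : ℝ) + 1) - δ * T = a + 2 * T := by rw [ha]; ring
  rw [hb] at hode ⊢
  -- continuity of K
  have hKc : Continuous K := by
    have : K = fun t => (2 / T) * max 0
        (-(Real.sin ((Real.pi / T) * (t + δ * T)))
          * |Real.sin ((Real.pi / T) * (t + δ * T))|) := funext hK
    rw [this]
    fun_prop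
  -- K vanishes on [a, a+T]
  have hK0 : ∀ t ∈ Icc a (a + T), K t = 0 := by
    intro t ht
    have hsin : 0 ≤ Real.sin ((Real.pi / T) * (t + δ * T)) := by
      set θ : ℝ := (Real.pi / T) * (t + δ * T) with hθ
      have e1 : (Real.pi / T) * (2 * T * (n : ℝ)) = (n : ℝ) * (2 * Real.pi) := by
        field_simp
      have e2 : (Real.pi / T) * (2 * T * (n : ℝ) + T) = (n : ℝ) * (2 * Real.pi) + Real.pi := by
        field_simp
      have h1 : (n : ℝ) * (2 * Real.pi) ≤ θ := by
        rw [← e1, hθ]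
        apply mul_le_mul_of_nonneg_left _ (le_of_lt hπT)
        have := ht.1; rw [ha] at this; linarith
      have h2 : θ ≤ (n : ℝ) * (2 * Real.pi) + Real.pi := by
        rw [← e2, hθ]
        apply mul_le_mul_of_nonneg_left _ (le_of_lt hπT)
        have := ht.2; rw [ha] at this; linarith
      have hper : Real.sin (θ - ((n : ℤ) : ℝ) * (2 * Real.pi)) = Real.sin θ :=
        Real.sin_sub_int_mul_two_pi θ n
      have hcast : ((n : ℤ) : ℝ) = (n : ℝ) := by push_cast; rfl
      rw [← hper, hcast]
      exact Real.sin_nonneg_of_nonneg_of_le_pi (by linarith) (by linarith)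
    rw [hK t]
    have : max 0 (-(Real.sin ((Real.pi / T) * (t + δ * T)))
        * |Real.sin ((Real.pi / T) * (t + δ * T))|) = 0 := by
      apply max_eq_left
      have := abs_nonneg (Real.sin ((Real.pi / T) * (t + δ * T)))
      nlinarith
    rw [this, mul_zero]
  -- K nonneg
  have hKnn : ∀ t, 0 ≤ K t := by
    intro t
    rw [hK t]
    exact mul_nonneg (by positivity) (le_max_left _ _)
  -- K = (2/T) sin² on [a+T, a+2T]
  have hKsq : ∀ t ∈ Icc (a + T) (a + 2 * T),
      K t = (2 / T) * (Real.sin ((Real.pi / T) * (t + δ * T))) ^ 2 := by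
    intro t ht
    have hsin : Real.sin ((Real.pi / T) * (t + δ * T)) ≤ 0 := by
      set θ : ℝ := (Real.pi / T) * (t + δ * T) with hθ
      have e1 : (Real.pi / T) * (2 * T * (n : ℝ) + T) = ((n : ℝ) + 1) * (2 * Real.pi) - Real.pi := by
        field_simp; ring
      have e2 : (Real.pi / T) * (2 * T * (n : ℝ) + 2 * T) = ((n : ℝ) + 1) * (2 * Real.pi) := by
        field_simp
      have h1 : ((n : ℝ) + 1) * (2 * Real.pi) - Real.pi ≤ θ := by
        rw [← e1, hθ]
        apply mul_le_mul_of_nonneg_left _ (le_of_lt hπT)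
        have := ht.1; rw [ha] at this; linarith
      have h2 : θ ≤ ((n : ℝ) + 1) * (2 * Real.pi) := by
        rw [← e2, hθ]
        apply mul_le_mul_of_nonneg_left _ (le_of_lt hπT)
        have := ht.2; rw [ha] at this; linarith
      have hper := Real.sin_sub_int_mul_two_pi θ ((n : ℤ) + 1)
      push_cast at hper
      rw [← hper]
      exact Real.sin_nonpos_of_nonpos_of_neg_pi_le (by linarith) (by linarith)
    rw [hK t]
    congr 1
    rw [abs_of_nonpos hsin]
    rw [max_eq_right (by nlinarith)]
    ring
  -- unit mass of K on [a+T, a+2T]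
  have hKint : (∫ τ in (a + T)..(a + 2 * T), K τ) = 1 := by
    have harg : ∀ τ : ℝ, (Real.pi / T) * (τ + δ * T) = (Real.pi / T) * τ + Real.pi * δ := by
      intro τ; field_simp
    have hcongr : (∫ τ in (a + T)..(a + 2 * T), K τ)
        = ∫ τ in (a + T)..(a + 2 * T),
            (fun y => (2 / T) * Real.sin y ^ 2) ((Real.pi / T) * τ + Real.pi * δ) := by
      apply intervalIntegral.integral_congr
      intro τ hτ
      rw [uIcc_of_le (by linarith)] at hτ
      simp only
      rw [hKsq τ hτ, harg τ]
    rw [hcongr, intervalIntegral.integral_comp_mul_add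
      (fun y => (2 / T) * Real.sin y ^ 2) (ne_of_gt hπT) (Real.pi * δ)]
    have e1 : (Real.pi / T) * (a + T) + Real.pi * δ = (n : ℝ) * (2 * Real.pi) + Real.pi := by
      rw [ha]; field_simp; ring
    have e2 : (Real.pi / T) * (a + 2 * T) + Real.pi * δ
        = (n : ℝ) * (2 * Real.pi) + 2 * Real.pi := by
      rw [ha]; field_simp; ring
    rw [e1, e2, intervalIntegral.integral_const_mul, integral_sin_sq]
    have s1 : Real.sin ((n : ℝ) * (2 * Real.pi) + Real.pi) = 0 := by
      have h := Real.sin_add_int_mul_two_pi Real.pi (n : ℤ)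
      push_cast at h
      rw [show (n : ℝ) * (2 * Real.pi) + Real.pi = Real.pi + (n : ℝ) * (2 * Real.pi) by ring,
        h, Real.sin_pi]
    have s2 : Real.sin ((n : ℝ) * (2 * Real.pi) + 2 * Real.pi) = 0 := by
      have h := Real.sin_add_int_mul_two_pi 0 ((n : ℤ) + 1)
      push_cast at h
      rw [show (n : ℝ) * (2 * Real.pi) + 2 * Real.pi = 0 + ((n : ℝ) + 1) * (2 * Real.pi) by ring,
        h, Real.sin_zero]
    rw [s1, s2]
    have hπ : Real.pi ≠ 0 := ne_of_gt Real.pi_pos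
    field_simp
    ring_nf; rw [mul_inv_cancel_right₀ hTne, mul_inv_cancel₀ hπ]
  -- x on [a, a+T]
  have hstep1 : ∀ t ∈ Icc a (a + T), x t = x a + ∫ τ in a..t, v τ := by
    intro t ht
    have hftc : (∫ τ in a..t, v τ) = x t - x a := by
      apply intervalIntegral.integral_eq_sub_of_hasDerivAt
      · intro τ hτ
        rw [uIcc_of_le ht.1] at hτ
        have hτ' : τ ∈ Icc a (a + 2 * T) := ⟨hτ.1, by have := hτ.2; have := ht.2; linarith⟩
        have h := hode τ hτ'
        have hKτ : K τ = 0 := hK0 τ ⟨hτ.1, le_trans hτ.2 ht.2⟩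
        rw [hKτ] at h
        simpa using h
      · exact hv.intervalIntegrable _ _
    rw [hftc]; ring
  -- the primitive of v shifted
  set g : ℝ → ℝ := fun τ => ∫ s in a..(τ - T), v s with hg_def
  have hgc : Continuous g := by
    have h1 : Continuous fun b : ℝ => ∫ s in a..b, v s :=
      intervalIntegral.continuous_primitive (fun c d => hv.intervalIntegrable c d) a
    exact h1.comp (continuous_sub_right T)
  -- representation formula
  have hrep : ∀ t ∈ Icc (a + T) (a + 2 * T),
      x t = x a * (1 - ∫ τ in (a + T)..t, K τ) + (∫ τ in a..t, v τ)
        - ∫ τ in (a + T)..t, K τ * g τ := by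
    intro t ht
    have hxaT : x (a + T) = x a + ∫ τ in a..(a + T), v τ :=
      hstep1 (a + T) ⟨by linarith, le_refl _⟩
    have hftc : (∫ τ in (a + T)..t, (-(K τ) * x (τ - T) + v τ)) = x t - x (a + T) := by
      apply intervalIntegral.integral_eq_sub_of_hasDerivAt
      · intro τ hτ
        rw [uIcc_of_le ht.1] at hτ
        exact hode τ ⟨by have := hτ.1; linarith, le_trans hτ.2 ht.2⟩
      · exact (((hKc.neg).mul (hx.comp (continuous_sub_right T))).add hv).intervalIntegrable _ _
    have hcongr : (∫ τ in (a + T)..t, (-(K τ) * x (τ - T) + v τ))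
        = ∫ τ in (a + T)..t, ((-(x a)) * K τ + (-(K τ * g τ)) + v τ) := by
      apply intervalIntegral.integral_congr
      intro τ hτ
      rw [uIcc_of_le ht.1] at hτ
      have hmem : τ - T ∈ Icc a (a + T) := by
        constructor
        · have := hτ.1; linarith
        · have := hτ.2; have := ht.2; linarith
      simp only
      rw [hstep1 (τ - T) hmem, hg_def]
      ring
    have i1 : IntervalIntegrable (fun τ => (-(x a)) * K τ) MeasureTheory.volume (a + T) t :=
      (continuous_const.mul hKc).intervalIntegrable _ _
    have i2 : IntervalIntegrable (fun τ => -(K τ * g τ)) MeasureTheory.volume (a + T) t :=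
      ((hKc.mul hgc).neg).intervalIntegrable _ _
    have i3 : IntervalIntegrable v MeasureTheory.volume (a + T) t :=
      hv.intervalIntegrable _ _
    rw [hcongr, intervalIntegral.integral_add (i1.add i2) i3,
      intervalIntegral.integral_add i1 i2, intervalIntegral.integral_const_mul,
      intervalIntegral.integral_neg] at hftc
    have hadj : (∫ τ in a..(a + T), v τ) + (∫ τ in (a + T)..t, v τ) = ∫ τ in a..t, v τ :=
      intervalIntegral.integral_add_adjacent_intervals
        (hv.intervalIntegrable _ _) (hv.intervalIntegrable _ _)
    rw [← hadj]
    linear_combination hxaT - hftc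
  constructor
  · intro t ht
    exact hrep t ht
  · -- the bound
    set M : ℝ := sSup ((fun τ => |v τ|) '' Icc a (a + 2 * T)) with hM_def
    have hbdd : BddAbove ((fun τ => |v τ|) '' Icc a (a + 2 * T)) :=
      (isCompact_Icc.image (continuous_abs.comp hv)).bddAbove
    have hMle : ∀ τ ∈ Icc a (a + 2 * T), |v τ| ≤ M := fun τ hτ =>
      le_csSup hbdd ⟨τ, hτ, rfl⟩
    have hM0 : 0 ≤ M :=
      le_trans (abs_nonneg (v a)) (hMle a ⟨le_refl _, by linarith⟩)
    have hx2 := hrep (a + 2 * T) ⟨by linarith, le_refl _⟩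
    rw [hKint] at hx2
    have hI1 : |∫ τ in a..(a + 2 * T), v τ| ≤ M * (2 * T) := by
      have h := intervalIntegral.norm_integral_le_of_norm_le_const
        (f := v) (a := a) (b := a + 2 * T) (C := M) ?_
      · rw [Real.norm_eq_abs] at h
        have : |a + 2 * T - a| = 2 * T := by rw [abs_of_nonneg (by linarith)]; ring
        rw [this] at h
        linarith
      · intro y hy
        rw [uIoc_of_le (by linarith : a ≤ a + 2 * T)] at hy
        rw [Real.norm_eq_abs]
        exact hMle y ⟨le_of_lt hy.1, hy.2⟩
    have hgbound : ∀ τ ∈ Icc (a + T) (a + 2 * T), |g τ| ≤ M * T := by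
      intro τ hτ
      have h := intervalIntegral.norm_integral_le_of_norm_le_const
        (f := v) (a := a) (b := τ - T) (C := M) ?_
      · rw [Real.norm_eq_abs] at h
        have habs : |τ - T - a| ≤ T := by
          rw [abs_of_nonneg (by have := hτ.1; linarith)]
          have := hτ.2; linarith
        calc |g τ| ≤ M * |τ - T - a| := h
          _ ≤ M * T := mul_le_mul_of_nonneg_left habs hM0
      · intro y hy
        rw [uIoc_of_le (by have := hτ.1; linarith : a ≤ τ - T)] at hy
        rw [Real.norm_eq_abs]
        exact hMle y ⟨le_of_lt hy.1, by have := hy.2; have := hτ.2; linarith⟩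
    have hI2 : |∫ τ in (a + T)..(a + 2 * T), K τ * g τ| ≤ M * T := by
      have h1 : |∫ τ in (a + T)..(a + 2 * T), K τ * g τ|
          ≤ ∫ τ in (a + T)..(a + 2 * T), |K τ * g τ| :=
        intervalIntegral.abs_integral_le_integral_abs (by linarith)
      have h2 : (∫ τ in (a + T)..(a + 2 * T), |K τ * g τ|)
          ≤ ∫ τ in (a + T)..(a + 2 * T), K τ * (M * T) := by
        apply intervalIntegral.integral_mono_on (by linarith)
          ((hKc.mul hgc).abs.intervalIntegrable _ _)
          ((hKc.mul continuous_const).intervalIntegrable _ _)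
        intro τ hτ
        simp only [Pi.mul_apply]
        rw [abs_mul, abs_of_nonneg (hKnn τ)]
        exact mul_le_mul_of_nonneg_left (hgbound τ hτ) (hKnn τ)
      have h3 : (∫ τ in (a + T)..(a + 2 * T), K τ * (M * T)) = M * T := by
        rw [intervalIntegral.integral_mul_const, hKint, one_mul]
      linarith
    have hfinal : |x (a + 2 * T)| ≤ M * (2 * T) + M * T := by
      rw [hx2]
      calc |x a * (1 - 1) + (∫ τ in a..(a + 2 * T), v τ)
            - ∫ τ in (a + T)..(a + 2 * T), K τ * g τ|
          = |(∫ τ in a..(a + 2 * T), v τ) - ∫ τ in (a + T)..(a + 2 * T), K τ * g τ| := by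
            rw [sub_self, mul_zero, zero_add]
        _ ≤ |∫ τ in a..(a + 2 * T), v τ| + |∫ τ in (a + T)..(a + 2 * T), K τ * g τ| :=
            abs_sub _ _
        _ ≤ M * (2 * T) + M * T := add_le_add hI1 hI2
    linarith [hfinal]
end

section
/- Let T > 0, δ ∈ (-1, 1], and K_T be the 2T-periodic pulse gain with support where sin((π/T)(t+δT)) ≤ 0, satisfying 0 ≤ K_T ≤ 2/T and unit mass per active half-period. Suppose x solves ẋ(t) = -K_T(t)·x(t-T) + v(t) with continuous v such that v(t) = 0 for all t ≥ t', where t' > 0. Then x(t) = 0 for all t ≥ 2T - δT + 2T·⌈(t' + δT)/(2T)⌉. -/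
open Real Set

private lemma aux_const (x : ℝ → ℝ) {a b : ℝ} (hab : a ≤ b)
    (h : ∀ t ∈ Icc a b, HasDerivAt x 0 t) : x b = x a := by
  have H := intervalIntegral.integral_eq_sub_of_hasDerivAt
      (f := x) (f' := fun _ => (0:ℝ))
      (fun t ht => h t (by rwa [Set.uIcc_of_le hab] at ht))
      (intervalIntegrable_const)
  simp at H
  linarith

theorem stmt_18 (T δ t' : ℝ) (hT : 0 < T) (hδ : δ ∈ Set.Ioc (-1 : ℝ) 1)
    (ht' : 0 < t')
    (K x v : ℝ → ℝ)
    (hK : ∀ t, K t = (2 / T) * max 0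
      (-(Real.sin ((Real.pi / T) * (t + δ * T)))
        * |Real.sin ((Real.pi / T) * (t + δ * T))|))
    (hx : Continuous x) (hv : Continuous v)
    (hvz : ∀ t ≥ t', v t = 0)
    (hode : ∀ t ≥ (0 : ℝ), HasDerivAt x (-(K t) * x (t - T) + v t) t) :
    ∀ t ≥ 2 * T - δ * T + 2 * T * (⌈(t' + δ * T) / (2 * T)⌉ : ℝ), x t = 0 := by
  intro t ht
  set m : ℤ := ⌈(t' + δ * T) / (2 * T)⌉ with hm
  set a : ℝ := 2 * T * (m : ℝ) - δ * T with ha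
  have hπ := Real.pi_pos
  have hπT : (0:ℝ) < Real.pi / T := div_pos hπ hT
  have hTne : T ≠ 0 := ne_of_gt hT
  have hπne : Real.pi ≠ 0 := ne_of_gt hπ
  -- a ≥ t'
  have hat' : t' ≤ a := by
    have h1 : (t' + δ * T) / (2 * T) ≤ (m : ℝ) := Int.le_ceil _
    rw [div_le_iff₀ (by linarith : (0:ℝ) < 2 * T)] at h1
    rw [ha]; linarith
  have ha0 : (0:ℝ) < a := lt_of_lt_of_le ht' hat'
  -- translate the sine
  have hS : ∀ s : ℝ, Real.sin ((Real.pi / T) * (s + δ * T))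
      = Real.sin ((Real.pi / T) * (s - a)) := by
    intro s
    have e : (Real.pi / T) * (s + δ * T)
        = (Real.pi / T) * (s - a) + (m : ℝ) * (2 * Real.pi) := by
      rw [ha]; field_simp; ring
    rw [e, Real.sin_add_int_mul_two_pi]
  -- K vanishes where the translated sine is nonneg
  have hK0 : ∀ s : ℝ, 0 ≤ Real.sin ((Real.pi / T) * (s - a)) → K s = 0 := by
    intro s hs
    rw [hK s, hS s]
    have h1 : -Real.sin ((Real.pi / T) * (s - a))
        * |Real.sin ((Real.pi / T) * (s - a))| ≤ 0 := by
      rw [abs_of_nonneg hs]; nlinarith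
    rw [max_eq_left h1, mul_zero]
  -- continuity of K
  have hKcont : Continuous K := by
    have : K = fun s => (2 / T) * max 0
        (-(Real.sin ((Real.pi / T) * (s + δ * T)))
          * |Real.sin ((Real.pi / T) * (s + δ * T))|) := funext hK
    rw [this]
    fun_prop
  -- sine sign facts
  have hsin1 : ∀ s ∈ Icc a (a + T), 0 ≤ Real.sin ((Real.pi / T) * (s - a)) := by
    intro s hs
    apply Real.sin_nonneg_of_nonneg_of_le_pi
    · exact mul_nonneg hπT.le (by linarith [hs.1])
    · have h := mul_le_mul_of_nonneg_left (by linarith [hs.2] : s - a ≤ T) hπT.le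
      rwa [div_mul_cancel₀ _ hTne] at h
  have hsin3 : ∀ s ∈ Icc (a + 2 * T) (a + 3 * T),
      0 ≤ Real.sin ((Real.pi / T) * (s - a)) := by
    intro s hs
    rw [← Real.sin_sub_two_pi]
    have h1 := mul_le_mul_of_nonneg_left (by linarith [hs.1] : 2 * T ≤ s - a) hπT.le
    have h2 := mul_le_mul_of_nonneg_left (by linarith [hs.2] : s - a ≤ 3 * T) hπT.le
    have e1 : (Real.pi / T) * (2 * T) = 2 * Real.pi := by field_simp
    have e2 : (Real.pi / T) * (3 * T) = 3 * Real.pi := by field_simp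
    rw [e1] at h1; rw [e2] at h2
    apply Real.sin_nonneg_of_nonneg_of_le_pi <;> linarith
  have hsin2 : ∀ s ∈ Icc (a + T) (a + 2 * T),
      Real.sin ((Real.pi / T) * (s - a)) ≤ 0 := by
    intro s hs
    have e : Real.sin ((Real.pi / T) * (s - a))
        = -Real.sin ((Real.pi / T) * (s - a) - Real.pi) := by
      rw [Real.sin_sub_pi]; ring
    rw [e, neg_nonpos]
    have h1 := mul_le_mul_of_nonneg_left (by linarith [hs.1] : T ≤ s - a) hπT.le
    have h2 := mul_le_mul_of_nonneg_left (by linarith [hs.2] : s - a ≤ 2 * T) hπT.le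
    have e1 : (Real.pi / T) * T = Real.pi := div_mul_cancel₀ _ hTne
    have e2 : (Real.pi / T) * (2 * T) = 2 * Real.pi := by field_simp
    rw [e1] at h1; rw [e2] at h2
    apply Real.sin_nonneg_of_nonneg_of_le_pi <;> linarith
  -- x is constant on [a, a+T]
  have hder1 : ∀ s ∈ Icc a (a + T), HasDerivAt x 0 s := by
    intro s hs
    have h := hode s (by linarith [hs.1])
    have hv0 : v s = 0 := hvz s (le_trans hat' hs.1)
    have hk0 : K s = 0 := hK0 s (hsin1 s hs)
    rw [hk0, hv0] at h
    simpa using h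
  have hc1 : ∀ s ∈ Icc a (a + T), x s = x a := by
    intro s hs
    exact aux_const x hs.1 (fun r hr => hder1 r ⟨hr.1, le_trans hr.2 hs.2⟩)
  set c : ℝ := x a with hc
  -- derivative on [a+T, a+2T]
  have hderK : ∀ s ∈ Icc (a + T) (a + 2 * T), HasDerivAt x (-(K s) * c) s := by
    intro s hs
    have h := hode s (by linarith [hs.1])
    have hv0 : v s = 0 := hvz s (by linarith [hs.1, hat'])
    have hx' : x (s - T) = c :=
      hc1 (s - T) ⟨by linarith [hs.1], by linarith [hs.2]⟩
    rw [hv0, hx'] at h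
    simpa using h
  -- the gain integrates to 1 over the active half-period
  set G : ℝ → ℝ := fun s => (1 / T) * (s - a)
      - (1 / (2 * Real.pi)) * Real.sin (2 * Real.pi * (s - a) / T) with hG
  have hGder : ∀ s ∈ Icc (a + T) (a + 2 * T), HasDerivAt G (K s) s := by
    intro s hs
    have hu : HasDerivAt (fun r => 2 * Real.pi * (r - a) / T)
        (2 * Real.pi / T) s := by
      have h0 := ((hasDerivAt_id s).sub_const a).const_mul (2 * Real.pi)
      have h1 := h0.div_const T
      simpa using h1
    have h2 : HasDerivAt (fun r => (1 / T) * (r - a)) (1 / T) s := by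
      simpa using ((hasDerivAt_id s).sub_const a).const_mul (1 / T)
    have h3 := hu.sin
    have h4 := h2.sub (h3.const_mul (1 / (2 * Real.pi)))
    refine (HasDerivAt.congr_deriv h4 ?_ : HasDerivAt G _ s)
    symm
    rw [hK s, hS s]
    have hsle := hsin2 s hs
    rw [abs_of_nonpos hsle, max_eq_right (by nlinarith)]
    have hcos : Real.cos (2 * Real.pi * (s - a) / T)
        = 1 - 2 * (Real.sin ((Real.pi / T) * (s - a))) ^ 2 := by
      have h2x : 2 * Real.pi * (s - a) / T = 2 * ((Real.pi / T) * (s - a)) := by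
        ring
      rw [h2x, Real.cos_two_mul]
      have hid := Real.sin_sq_add_cos_sq ((Real.pi / T) * (s - a))
      nlinarith [hid]
    rw [hcos]
    field_simp
    ring
  have hIK : (∫ s in (a + T)..(a + 2 * T), K s) = 1 := by
    rw [intervalIntegral.integral_eq_sub_of_hasDerivAt
        (fun s hsmem => hGder s (by
          rwa [Set.uIcc_of_le (by linarith : a + T ≤ a + 2 * T)] at hsmem))
        (hKcont.intervalIntegrable _ _)]
    rw [hG]
    have e1 : 2 * Real.pi * (a + 2 * T - a) / T = 2 * Real.pi + 2 * Real.pi := by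
      field_simp; ring
    have e2 : 2 * Real.pi * (a + T - a) / T = 2 * Real.pi := by
      field_simp; ring
    simp only [e1, e2]
    rw [Real.sin_add_two_pi, Real.sin_two_pi]
    field_simp
    ring
  -- x (a + 2T) = 0
  have hx2T : x (a + 2 * T) = 0 := by
    have hint := intervalIntegral.integral_eq_sub_of_hasDerivAt
        (f := x) (f' := fun s => -(K s) * c)
        (fun s hsmem => hderK s (by
          rwa [Set.uIcc_of_le (by linarith : a + T ≤ a + 2 * T)] at hsmem))
        ((hKcont.neg.mul continuous_const).intervalIntegrable _ _)
    have hval : (∫ s in (a + T)..(a + 2 * T), -(K s) * c) = -c := by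
      have hrw : (fun s => -(K s) * c) = fun s => (-c) * K s := by
        funext s; ring
      rw [hrw, intervalIntegral.integral_const_mul, hIK]; ring
    have hxaT : x (a + T) = c := hc1 (a + T) ⟨by linarith, le_refl _⟩
    rw [hval, hxaT] at hint
    linarith
  -- induction over subsequent periods
  have hzero : ∀ k : ℕ, ∀ s ∈ Icc (a + 2 * T) (a + 2 * T + (k : ℝ) * T),
      x s = 0 := by
    intro k
    induction k with
    | zero =>
      intro s hs
      simp only [Nat.cast_zero, zero_mul, add_zero] at hs
      have hseq : s = a + 2 * T := le_antisymm hs.2 hs.1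
      rw [hseq]; exact hx2T
    | succ k ih =>
      intro s hs
      by_cases hsk : s ≤ a + 2 * T + (k : ℝ) * T
      · exact ih s ⟨hs.1, hsk⟩
      · push_neg at hsk
        have hkT : (0:ℝ) ≤ (k : ℝ) * T := by positivity
        have hs2 : s ≤ a + 2 * T + ((k : ℝ) + 1) * T := by
          have := hs.2; push_cast at this; linarith
        have hder : ∀ r ∈ Icc (a + 2 * T + (k : ℝ) * T) s, HasDerivAt x 0 r := by
          intro r hr
          have hrge : a + 2 * T + (k : ℝ) * T ≤ r := hr.1
          have hrle : r ≤ a + 2 * T + ((k : ℝ) + 1) * T := le_trans hr.2 hs2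
          have h := hode r (by linarith)
          have hv0 : v r = 0 := hvz r (by linarith)
          rcases Nat.eq_zero_or_pos k with hk0 | hkpos
          · subst hk0
            simp only [Nat.cast_zero, zero_mul, add_zero] at hrge hrle
            have hk0' : K r = 0 := hK0 r (hsin3 r ⟨hrge, by linarith⟩)
            rw [hk0', hv0] at h
            simpa using h
          · have hk1 : (1:ℝ) ≤ (k : ℝ) := by exact_mod_cast hkpos
            have hx' : x (r - T) = 0 := ih (r - T)
              ⟨by nlinarith, by linarith⟩
            rw [hx', hv0] at h
            simpa using h
        have hx0 : x (a + 2 * T + (k : ℝ) * T) = 0 :=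
          ih _ ⟨by linarith, le_refl _⟩
        have heq := aux_const x hsk.le hder
        rw [heq, hx0]
  -- conclude
  have hthr : 2 * T - δ * T + 2 * T * (m : ℝ) = a + 2 * T := by
    rw [ha]; ring
  rw [hthr] at ht
  obtain ⟨n, hn⟩ := exists_nat_ge ((t - (a + 2 * T)) / T)
  apply hzero n t
  refine ⟨ht, ?_⟩
  rw [div_le_iff₀ hT] at hn
  linarith
end
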